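/- Let T be a finite tree on n vertices. Then the adjacency matrix of T over ℝ is invertible (equivalently r(T) = n) if and only if T has a perfect matching, i.e., a matching M with n = 2|M|. -/

import Mathlib

attribute [local instance] Classical.propDecidable

open SimpleGraph Function

namespace TreeAdjAux

variable {V : Type*}

noncomputable def iterWalk (G : SimpleGraph V) (f : V → V) (hf : ∀ i, G.Adj i (f i)) :
    ∀ (m : ℕ) (y : V), G.Walk y (f^[m] y)
  | 0, y => Walk.nil
  | (m+1), y => Walk.cons (hf y) (iterWalk G f hf m (f y))

lemma iterWalk_support (G : SimpleGraph V) (f : V → V) (hf : ∀ i, G.Adj i (f i)) :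
    ∀ (m : ℕ) (y : V), (iterWalk G f hf m y).support
      = (List.range (m+1)).map (fun a => f^[a] y)
  | 0, y => by simp [iterWalk]
  | (m+1), y => by
    show y :: (iterWalk G f hf m (f y)).support = _
    rw [iterWalk_support G f hf m (f y),
      List.range_succ_eq_map]
    simp [List.map_map, Function.comp_def, Function.iterate_succ_apply]

lemma iterWalk_edges (G : SimpleGraph V) (f : V → V) (hf : ∀ i, G.Adj i (f i)) :
    ∀ (m : ℕ) (y : V), (iterWalk G f hf m y).edges
      = (List.range m).map (fun a => s(f^[a] y, f^[a+1] y))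
  | 0, y => by simp [iterWalk]
  | (m+1), y => by
    show s(y, f y) :: (iterWalk G f hf m (f y)).edges = _
    rw [iterWalk_edges G f hf m (f y),
      List.range_succ_eq_map]
    simp [List.map_map, Function.comp_def, Function.iterate_succ_apply]

lemma invol_of_adj {G : SimpleGraph V} (hG : G.IsAcyclic) (σ : Equiv.Perm V) [Finite V]
    (h : ∀ i, G.Adj i (σ i)) : ∀ x, σ (σ x) = x := by
  intro x
  by_contra hx
  have hcast : Nonempty (Fintype V) := ⟨Fintype.ofFinite V⟩
  set f : V → V := fun v => σ v with hfdef
  -- x is a periodic point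
  have hiter : ∀ n : ℕ, f^[n] = ⇑(σ ^ n) := by
    intro n
    induction n with
    | zero => simp
    | succ n ih => rw [Function.iterate_succ', ih, pow_succ']; rfl
  have hper : Function.IsPeriodicPt f (orderOf σ) x := by
    have : Fintype V := Fintype.ofFinite V
    unfold Function.IsPeriodicPt Function.IsFixedPt
    rw [hiter, pow_orderOf_eq_one]; rfl
  set k := Function.minimalPeriod f x with hkdef
  have hkpos : 0 < k := hper.minimalPeriod_pos (by
    have : Fintype V := Fintype.ofFinite V
    exact orderOf_pos σ)
  have hk : f^[k] x = x := Function.iterate_minimalPeriod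
  have hinj : ∀ a < k, ∀ b < k, f^[a] x = f^[b] x → a = b := by
    intro a ha b hb hab
    exact Function.iterate_injOn_Iio_minimalPeriod (Set.mem_Iio.2 ha) (Set.mem_Iio.2 hb) hab
  have hne1 : f x ≠ x := fun hfx => (G.ne_of_adj (h x)) hfx.symm
  have hne2 : f (f x) ≠ x := fun hfx => hx hfx
  have hk1 : k ≠ 1 := by
    intro h1
    apply hne1; have := hk; rw [h1] at this; simpa using this
  have hk2 : k ≠ 2 := by
    intro h2
    apply hne2; have := hk; rw [h2] at this; simpa [Function.iterate_succ_apply] using this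
  have hk3 : 3 ≤ k := by omega
  -- injectivity on [1, k]
  have hinj' : ∀ a, 1 ≤ a → a ≤ k → ∀ b, 1 ≤ b → b ≤ k → f^[a] x = f^[b] x → a = b := by
    intro a ha1 hak b hb1 hbk hab
    rcases eq_or_lt_of_le hak with rfl | hak'
    · rcases eq_or_lt_of_le hbk with rfl | hbk'
      · rfl
      · rw [hk] at hab
        have := hinj 0 hkpos b hbk' hab
        omega
    · rcases eq_or_lt_of_le hbk with rfl | hbk'
      · rw [hk] at hab
        have := hinj a hak' 0 hkpos hab
        omega
      · exact hinj a hak' b hbk' hab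
  -- the path from f x back to x
  have hcast : f^[k-1] (f x) = x := by
    rw [← Function.iterate_succ_apply]
    have h2 : Nat.succ (k-1) = k := by omega
    rw [h2, hk]
  let p : G.Walk (f x) x := (iterWalk G f h (k-1) (f x)).copy rfl hcast
  have hsupp : p.support = (List.range k).map (fun a => f^[a+1] x) := by
    show ((iterWalk G f h (k-1) (f x)).copy rfl hcast).support = _
    rw [Walk.support_copy, iterWalk_support]
    have h2 : k - 1 + 1 = k := by omega
    rw [h2]
    simp [Function.iterate_succ_apply]
  have hpath : p.IsPath := by
    rw [Walk.isPath_def, hsupp]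
    refine List.Nodup.map_on ?_ List.nodup_range
    intro a ha b hb hab
    simp only [List.mem_range] at ha hb
    have := hinj' (a+1) (by omega) (by omega) (b+1) (by omega) (by omega) hab
    omega
  have hedges : p.edges = (List.range (k-1)).map (fun a => s(f^[a+1] x, f^[a+2] x)) := by
    show ((iterWalk G f h (k-1) (f x)).copy rfl hcast).edges = _
    rw [Walk.edges_copy, iterWalk_edges]
    congr 1
  have hedge : ¬ s(x, f x) ∈ p.edges := by
    rw [hedges]
    intro hmem
    simp only [List.mem_map, List.mem_range] at hmem
    obtain ⟨a, ha, heq⟩ := hmem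
    rw [Sym2.eq_iff] at heq
    rcases heq with ⟨h1, h2⟩ | ⟨h1, h2⟩
    · have hx0 : f^[k] x = f^[a+1] x := by rw [hk]; exact h1.symm
      have := hinj' k (by omega) le_rfl (a+1) (by omega) (by omega) hx0
      omega
    · have hfx : f^[1] x = f^[a+1] x := h1.symm
      have ha1 : (1:ℕ) = a + 1 := hinj' 1 le_rfl (by omega) (a+1) (by omega) (by omega) hfx
      have ha0 : a = 0 := by omega
      apply hne2
      rw [ha0] at h2
      exact h2
  have hcyc : (Walk.cons (h x) (⟨p, hpath⟩ : G.Path (f x) x).val).IsCycle :=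
    SimpleGraph.Path.cons_isCycle ⟨p, hpath⟩ (h x) hedge
  exact hG _ hcyc



lemma sign_invol {V : Type*} [Fintype V] [DecidableEq V] (σ : Equiv.Perm V)
    (hinv : ∀ i, σ (σ i) = i) (hfix : ∀ i, σ i ≠ i) :
    Equiv.Perm.sign σ = (-1 : ℤˣ) ^ (Fintype.card V + Fintype.card V / 2) := by
  have hσ2 : σ ^ 2 = 1 := by
    ext i; simp [pow_succ, hinv i]
  have hord : orderOf σ ∣ 2 := orderOf_dvd_of_pow_eq_one hσ2
  have h2 : ∀ m ∈ σ.cycleType, m = 2 := by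
    intro m hm
    have hdvd : m ∣ orderOf σ := by
      rw [← Equiv.Perm.lcm_cycleType]
      exact Multiset.dvd_lcm hm
    have hle : 2 ≤ m := Equiv.Perm.two_le_of_mem_cycleType hm
    have hm2 : m ∣ 2 := hdvd.trans hord
    have := Nat.le_of_dvd (by norm_num) hm2
    omega
  have hsum : σ.cycleType.sum = Fintype.card V := by
    rw [Equiv.Perm.sum_cycleType]
    have : σ.support = Finset.univ := by
      rw [Finset.eq_univ_iff_forall]
      intro i; rw [Equiv.Perm.mem_support]; exact hfix i
    rw [this, Finset.card_univ]
  have hrep : σ.cycleType = Multiset.replicate (Multiset.card σ.cycleType) 2 :=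
    Multiset.eq_replicate_card.2 h2
  have hsum2 : σ.cycleType.sum = 2 * Multiset.card σ.cycleType := by
    rw [hrep]; simp [Multiset.sum_replicate, mul_comm]
  have hcard : Multiset.card σ.cycleType = Fintype.card V / 2 := by omega
  rw [Equiv.Perm.sign_of_cycleType, hsum, hcard]


lemma matching_of_invol {V : Type*} [Fintype V] (G : SimpleGraph V) (σ : Equiv.Perm V)
    (h : ∀ i, G.Adj i (σ i)) (hinv : ∀ i, σ (σ i) = i) :
    ∃ M : Finset (Sym2 V), ↑M ⊆ G.edgeSet ∧
      (∀ e ∈ M, ∀ f ∈ M, e ≠ f → ∀ w : V, ¬(w ∈ e ∧ w ∈ f)) ∧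
      Fintype.card V = 2 * M.card := by
  classical
  set M : Finset (Sym2 V) := Finset.image (fun i => s(i, σ i)) Finset.univ with hM
  have hmem : ∀ e ∈ M, ∃ i, e = s(i, σ i) := by
    intro e he
    simp only [hM, Finset.mem_image, Finset.mem_univ, true_and] at he
    obtain ⟨i, hi⟩ := he
    exact ⟨i, hi.symm⟩
  have hsub : ↑M ⊆ G.edgeSet := by
    intro e he
    obtain ⟨i, rfl⟩ := hmem e he
    exact (G.mem_edgeSet).2 (h i)
  have key : ∀ u w : V, w ∈ s(u, σ u) → s(u, σ u) = s(w, σ w) := by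
    intro u w hw
    rw [Sym2.mem_iff] at hw
    rcases hw with rfl | rfl
    · rfl
    · rw [hinv]; exact Sym2.eq_swap
  have hdisj : ∀ e ∈ M, ∀ f ∈ M, e ≠ f → ∀ w : V, ¬(w ∈ e ∧ w ∈ f) := by
    intro e he f hf hef w ⟨hwe, hwf⟩
    obtain ⟨i, rfl⟩ := hmem e he
    obtain ⟨j, rfl⟩ := hmem f hf
    exact hef ((key i w hwe).trans (key j w hwf).symm)
  refine ⟨M, hsub, hdisj, ?_⟩
  -- counting
  have hne : ∀ i : V, σ i ≠ i := fun i hi => G.ne_of_adj (h i) hi.symm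
  have hcover : (M.biUnion (fun e => Finset.univ.filter (· ∈ e))) = Finset.univ := by
    apply Finset.eq_univ_of_forall
    intro v
    rw [Finset.mem_biUnion]
    refine ⟨s(v, σ v), ?_, by simp⟩
    simp only [hM, Finset.mem_image, Finset.mem_univ, true_and]
    exact ⟨v, rfl⟩
  have hdisj2 : ∀ e ∈ M, ∀ f ∈ M, e ≠ f →
      Disjoint (Finset.univ.filter (· ∈ e)) (Finset.univ.filter (· ∈ f)) := by
    intro e he f hf hef
    rw [Finset.disjoint_left]
    intro w hw hw'
    simp only [Finset.mem_filter] at hw hw'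
    exact hdisj e he f hf hef w ⟨hw.2, hw'.2⟩
  have hc2 : ∀ e ∈ M, (Finset.univ.filter (· ∈ e)).card = 2 := by
    intro e he
    obtain ⟨i, rfl⟩ := hmem e he
    have : Finset.univ.filter (· ∈ s(i, σ i)) = {i, σ i} := by
      ext v
      simp [Sym2.mem_iff]
    rw [this, Finset.card_insert_of_notMem (by
        simp only [Finset.mem_singleton]
        exact fun hh => (hne i) hh.symm),
      Finset.card_singleton]
  calc Fintype.card V = (M.biUnion (fun e => Finset.univ.filter (· ∈ e))).card := by
        rw [hcover, Finset.card_univ]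
    _ = ∑ e ∈ M, (Finset.univ.filter (· ∈ e)).card := Finset.card_biUnion hdisj2
    _ = ∑ e ∈ M, 2 := Finset.sum_congr rfl hc2
    _ = 2 * M.card := by rw [Finset.sum_const, smul_eq_mul, mul_comm]


lemma invol_of_matching {V : Type*} [Fintype V] (G : SimpleGraph V) (M : Finset (Sym2 V))
    (hsub : ↑M ⊆ G.edgeSet)
    (hdisj : ∀ e ∈ M, ∀ f ∈ M, e ≠ f → ∀ w : V, ¬(w ∈ e ∧ w ∈ f))
    (hcard : Fintype.card V = 2 * M.card) :
    ∃ σ : Equiv.Perm V, ∀ i, G.Adj i (σ i) := by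
  classical
  have hc2 : ∀ e ∈ M, (Finset.univ.filter (· ∈ e)).card = 2 := by
    intro e he
    induction e using Sym2.inductionOn with
    | hf a b =>
      have hadj : G.Adj a b := (G.mem_edgeSet).1 (hsub he)
      have hab : a ≠ b := G.ne_of_adj hadj
      have : Finset.univ.filter (· ∈ s(a, b)) = {a, b} := by
        ext v; simp [Sym2.mem_iff]
      rw [this, Finset.card_insert_of_notMem (by simpa using hab), Finset.card_singleton]
  have hdisj2 : ∀ e ∈ M, ∀ f ∈ M, e ≠ f →
      Disjoint (Finset.univ.filter (· ∈ e)) (Finset.univ.filter (· ∈ f)) := by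
    intro e he f hf hef
    rw [Finset.disjoint_left]
    intro w hw hw'
    simp only [Finset.mem_filter] at hw hw'
    exact hdisj e he f hf hef w ⟨hw.2, hw'.2⟩
  have hcover : (M.biUnion (fun e => Finset.univ.filter (· ∈ e))) = Finset.univ := by
    apply Finset.eq_univ_of_card
    rw [Finset.card_biUnion hdisj2, Finset.sum_congr rfl hc2, Finset.sum_const, smul_eq_mul,
      hcard, mul_comm]
  have hex : ∀ v : V, ∃ e, e ∈ M ∧ v ∈ e := by
    intro v
    have : v ∈ M.biUnion (fun e => Finset.univ.filter (· ∈ e)) := by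
      rw [hcover]; exact Finset.mem_univ v
    rw [Finset.mem_biUnion] at this
    obtain ⟨e, he, hv⟩ := this
    exact ⟨e, he, (Finset.mem_filter.1 hv).2⟩
  choose E hEM hEv using hex
  have huniq : ∀ v e, e ∈ M → v ∈ e → e = E v := by
    intro v e he hv
    by_contra hne
    exact hdisj e he (E v) (hEM v) hne v ⟨hv, hEv v⟩
  let f : V → V := fun v => Sym2.Mem.other (hEv v)
  have hspec : ∀ v, s(v, f v) = E v := fun v => Sym2.other_spec (hEv v)
  have hadj : ∀ v, G.Adj v (f v) := by
    intro v
    rw [← G.mem_edgeSet, hspec]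
    exact hsub (hEM v)
  have hEf : ∀ v, E (f v) = E v := by
    intro v
    have hfv : f v ∈ E v := by rw [← hspec v]; exact Sym2.mem_mk_right _ _
    exact (huniq (f v) (E v) (hEM v) hfv).symm
  have hinv : Function.Involutive f := by
    intro v
    have h1 : s(f v, f (f v)) = s(v, f v) := by rw [hspec, hEf, ← hspec]
    rw [Sym2.eq_iff] at h1
    rcases h1 with ⟨h2, h3⟩ | ⟨h2, h3⟩
    · exact absurd h2 (hadj v).ne'
    · exact h3
  exact ⟨hinv.toPerm, hadj⟩

lemma det_adj_filter {V : Type*} [Fintype V] (G : SimpleGraph V) :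
    (G.adjMatrix ℝ).det
      = ∑ σ ∈ Finset.univ.filter (fun σ : Equiv.Perm V => ∀ i, G.Adj (σ i) i),
          ((Equiv.Perm.sign σ : ℤ) : ℝ) := by
  classical
  rw [Matrix.det_apply, Finset.sum_filter]
  apply Finset.sum_congr rfl
  intro σ _
  by_cases hσ : ∀ i, G.Adj (σ i) i
  · have : ∀ i ∈ Finset.univ, G.adjMatrix ℝ (σ i) i = 1 := by
      intro i _; simp [SimpleGraph.adjMatrix_apply, hσ i]
    rw [Finset.prod_congr rfl this, Finset.prod_const_one, if_pos hσ]
    simp [Units.smul_def]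
  · push_neg at hσ
    obtain ⟨i, hi⟩ := hσ
    rw [Finset.prod_eq_zero (Finset.mem_univ i) (by simp [SimpleGraph.adjMatrix_apply, hi]),
      if_neg (by push_neg; exact ⟨i, hi⟩)]
    simp

end TreeAdjAux

open TreeAdjAux in
/-- A finite tree has invertible (real) adjacency matrix if and only if it has a perfect
matching, i.e. a set `M` of pairwise vertex-disjoint edges with `|V| = 2|M|`. -/
theorem tree_adjMatrix_isUnit_iff_perfectMatching {V : Type*} [Fintype V] (T : SimpleGraph V)
    (hT : T.IsTree) :
    IsUnit (T.adjMatrix ℝ) ↔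
      ∃ M : Finset (Sym2 V), ↑M ⊆ T.edgeSet ∧
        (∀ e ∈ M, ∀ f ∈ M, e ≠ f → ∀ w : V, ¬(w ∈ e ∧ w ∈ f)) ∧
        Fintype.card V = 2 * M.card := by
  classical
  rw [Matrix.isUnit_iff_isUnit_det, isUnit_iff_ne_zero]
  set S := Finset.univ.filter (fun σ : Equiv.Perm V => ∀ i, T.Adj (σ i) i) with hS
  have hdet := det_adj_filter T
  rw [← hS] at hdet
  constructor
  · intro hne
    have hSne : S.Nonempty := by
      by_contra hSe
      rw [Finset.not_nonempty_iff_eq_empty] at hSe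
      rw [hdet, hSe, Finset.sum_empty] at hne
      exact hne rfl
    obtain ⟨σ, hσ⟩ := hSne
    rw [hS, Finset.mem_filter] at hσ
    have hadj : ∀ i, T.Adj i (σ i) := fun i => (hσ.2 i).symm
    exact matching_of_invol T σ hadj (invol_of_adj hT.IsAcyclic σ hadj)
  · rintro ⟨M, h1, h2, h3⟩
    obtain ⟨σ, hσ⟩ := invol_of_matching T M h1 h2 h3
    have hmem : σ ∈ S := by
      rw [hS, Finset.mem_filter]
      exact ⟨Finset.mem_univ _, fun i => (hσ i).symm⟩
    have hconst : ∀ τ ∈ S, ((Equiv.Perm.sign τ : ℤ) : ℝ)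
        = (-1 : ℝ) ^ (Fintype.card V + Fintype.card V / 2) := by
      intro τ hτ
      rw [hS, Finset.mem_filter] at hτ
      have hadjτ : ∀ i, T.Adj i (τ i) := fun i => (hτ.2 i).symm
      have hinvτ := invol_of_adj hT.IsAcyclic τ hadjτ
      have hfixτ : ∀ i, τ i ≠ i := fun i hi => T.ne_of_adj (hadjτ i) hi.symm
      rw [sign_invol τ hinvτ hfixτ]
      push_cast
      norm_num
    rw [hdet, Finset.sum_congr rfl hconst, Finset.sum_const]
    have hcard : S.card ≠ 0 := Finset.card_ne_zero_of_mem hmem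
    intro h0
    rw [nsmul_eq_mul, mul_eq_zero] at h0
    rcases h0 with h0 | h0
    · exact hcard (by exact_mod_cast h0)
    · exact pow_ne_zero _ (by norm_num) h0
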